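/- Let ℓ ≥ 1 and k ≥ 2, and set n = ℓ^{k−1}. Define the k-tuple M = (q_1,…,q_k) of length-n level-ℓ sequences by q_1(i) = 0 for all i, and for 2 ≤ j ≤ k, q_j(i) = (⌊i / ℓ^{k−j}⌋) mod ℓ (so that the cross sections of M are exactly the ℓ^{k−1} tuples in (Fin ℓ)^k with first coordinate 0, listed in lexicographic order). Then M is complete: for every k-tuple Φ = (φ_1,…,φ_k) of permutations of Fin ℓ, Φ(M) = (φ_1 ∘ q_1,…,φ_k ∘ q_k) has exactly one constant cross section. -/

import Mathlib

/-- The cross section of a \`k\`-tuple of sequences at index \`i\`. -/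
def crossSection {n ℓ k : ℕ} (Q : Fin k → Fin n → Fin ℓ) (i : Fin n) : Fin k → Fin ℓ :=
  fun j => Q j i

/-- Two tuples in \`(Fin ℓ)^k\` are incompatible if they differ in every coordinate. -/
def Incompatible {k ℓ : ℕ} (c c' : Fin k → Fin ℓ) : Prop :=
  ∀ j, c j ≠ c' j

/-- Two tuples in \`(Fin ℓ)^k\` are connected if they are identical or incompatible. -/
def Connected {k ℓ : ℕ} (c c' : Fin k → Fin ℓ) : Prop :=
  c = c' ∨ Incompatible c c'

/-- A tuple in \`(Fin ℓ)^k\` is constant if all its coordinates are equal. -/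
def IsConstant {k ℓ : ℕ} (c : Fin k → Fin ℓ) : Prop :=
  ∀ j j' , c j = c j'


lemma digits_inj (ℓ : ℕ) (hℓ : 1 ≤ ℓ) :
    ∀ N (i i' : ℕ), i < ℓ ^ N → i' < ℓ ^ N →
      (∀ m < N, i / ℓ ^ m % ℓ = i' / ℓ ^ m % ℓ) → i = i' := by
  intro N
  induction N with
  | zero => intro i i' hi hi' _; simp [pow_zero] at hi hi'; omega
  | succ N ih =>
    intro i i' hi hi' h
    have h0 := h 0 (by omega)
    simp at h0
    rw [pow_succ'] at hi hi'
    have h1 : i / ℓ = i' / ℓ := by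
      apply ih
      · exact Nat.div_lt_of_lt_mul hi
      · exact Nat.div_lt_of_lt_mul hi'
      · intro m hm
        rw [Nat.div_div_eq_div_mul, Nat.div_div_eq_div_mul, ← pow_succ']
        exact h (m + 1) (by omega)
    have e1 := Nat.div_add_mod i ℓ
    rw [h1] at e1
    have e2 := Nat.div_add_mod i' ℓ
    omega

lemma digits_ex (ℓ : ℕ) (hℓ : 1 ≤ ℓ) :
    ∀ N (d : ℕ → ℕ), (∀ m, d m < ℓ) → ∃ i < ℓ ^ N, ∀ m < N, i / ℓ ^ m % ℓ = d m := by
  intro N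
  induction N with
  | zero => intro d hd; exact ⟨0, by simp, by omega⟩
  | succ N ih =>
    intro d hd
    obtain ⟨i', hi', hdig⟩ := ih (fun m => d (m + 1)) (fun m => hd _)
    have hd0 := hd 0
    have hdiv : (d 0 + ℓ * i') / ℓ = i' := by
      rw [Nat.add_mul_div_left _ _ (by omega : 0 < ℓ), Nat.div_eq_of_lt hd0, zero_add]
    refine ⟨d 0 + ℓ * i', ?_, ?_⟩
    · rw [pow_succ']
      have : ℓ * (i' + 1) ≤ ℓ * ℓ ^ N := Nat.mul_le_mul_left ℓ hi'
      nlinarith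
    · intro m hm
      cases m with
      | zero =>
        simpa [Nat.mul_comm] using Nat.mod_eq_of_lt hd0
      | succ m =>
        rw [pow_succ', ← Nat.div_div_eq_div_mul, hdiv]
        exact hdig m (by omega)

/-- The tuple `M` of `k` sequences of length `ℓ^(k-1)` whose cross sections are exactly
the tuples of `(Fin ℓ)^k` with first coordinate `0` in lexicographic order is complete:
after applying any tuple of permutations, it has exactly one constant cross section. -/
theorem M_complete (ℓ k : ℕ) (hℓ : 1 ≤ ℓ) (hk : 2 ≤ k)
    (M : Fin k → Fin (ℓ ^ (k - 1)) → Fin ℓ)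
    (hM : ∀ (j : Fin k) (i : Fin (ℓ ^ (k - 1))),
      (M j i).val = (i.val / ℓ ^ (k - 1 - j.val)) % ℓ) :
    ∀ Φ : Fin k → Equiv.Perm (Fin ℓ),
      ∃! i : Fin (ℓ ^ (k - 1)), IsConstant (crossSection (fun j => ⇑(Φ j) ∘ M j) i) := by
  intro Φ
  have hkpos : 0 < k := by omega
  set z : Fin ℓ := ⟨0, hℓ⟩ with hz
  set j0 : Fin k := ⟨0, hkpos⟩ with hj0
  set t : Fin ℓ := Φ j0 z with ht
  set d : ℕ → ℕ := fun m => ((Φ ⟨k - 1 - m, by omega⟩)⁻¹ t).val with hdd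
  have hd : ∀ m, d m < ℓ := fun m => ((Φ ⟨k - 1 - m, by omega⟩)⁻¹ t).isLt
  -- M at row 0 is always z
  have hM0 : ∀ i : Fin (ℓ ^ (k - 1)), M j0 i = z := by
    intro i
    apply Fin.ext
    rw [hM]
    simp only [hj0]
    rw [Nat.sub_zero, Nat.div_eq_of_lt i.isLt]
    simp [hz]
  have key : ∀ i : Fin (ℓ ^ (k - 1)),
      IsConstant (crossSection (fun j => ⇑(Φ j) ∘ M j) i) ↔
        ∀ m < k - 1, i.val / ℓ ^ m % ℓ = d m := by
    intro i
    constructor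
    · intro h m hm
      have hjlt : k - 1 - m < k := by omega
      set j : Fin k := ⟨k - 1 - m, hjlt⟩ with hj
      have := h j j0
      simp only [crossSection, Function.comp_apply] at this
      rw [hM0 i] at this
      have hMji : M j i = (Φ j)⁻¹ t := by
        rw [ht]
        exact (Equiv.eq_symm_apply (Φ j)).mpr this
      have hv := congrArg Fin.val hMji
      rw [hM] at hv
      have hjm : k - 1 - j.val = m := by simp only [hj]; omega
      rw [hjm] at hv
      exact hv
    · intro h
      have hall : ∀ j : Fin k, Φ j (M j i) = t := by
        intro j
        by_cases hj0v : j.val = 0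
        · have : j = j0 := Fin.ext hj0v
          rw [this, hM0 i, ht]
        · have hjm : k - 1 - j.val < k - 1 := by
            have := j.isLt; omega
          have hMji : M j i = (Φ j)⁻¹ t := by
            apply Fin.ext
            rw [hM]
            have := h (k - 1 - j.val) hjm
            rw [this, hdd]
            have hje : (⟨k - 1 - (k - 1 - j.val), by omega⟩ : Fin k) = j := by
              apply Fin.ext
              simp only
              have := j.isLt; omega
            simp only [hje]
          rw [hMji]
          exact (Φ j).apply_symm_apply t
      intro j j'
      simp only [crossSection, Function.comp_apply]
      rw [hall j, hall j']
  obtain ⟨i, hi, hdig⟩ := digits_ex ℓ hℓ (k - 1) d hd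
  refine ⟨⟨i, hi⟩, (key _).mpr (fun m hm => hdig m hm), ?_⟩
  intro y hy
  apply Fin.ext
  exact digits_inj ℓ hℓ (k - 1) y.val i y.isLt hi
    (fun m hm => ((key y).mp hy m hm).trans (hdig m hm).symm)
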